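/- Let h ∈ ℝ[x] be a univariate polynomial of odd degree d = 2d₀+1 that is nonnegative on [a,b] with a < b. Then there exist polynomials p, q ∈ ℝ[x] of degree at most d₀ such that h = (x-a)·p² + (b-x)·q². -/

import Mathlib

open Polynomial Complex


lemma helper_eq (p q : Polynomial ℝ) (s : Set ℝ) (hs : s.Finite)
    (h : ∀ x ∉ s, p.eval x = q.eval x) : p = q := by
  apply Polynomial.eq_of_infinite_eval_eq
  exact hs.infinite_compl.mono (fun x hx => h x hx)

lemma helper_nonneg (p : Polynomial ℝ) (s : Set ℝ) (hs : s.Finite)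
    (h : ∀ x ∉ s, 0 ≤ p.eval x) : ∀ x, 0 ≤ p.eval x := by
  have hd : Dense sᶜ := hs.countable.dense_compl ℝ
  have hcl : closure sᶜ ⊆ {x : ℝ | 0 ≤ p.eval x} :=
    closure_minimal (fun x hx => h x hx) (isClosed_le continuous_const (Polynomial.continuous p))
  intro x
  exact hcl (hd.closure_eq ▸ Set.mem_univ x)

-- product identity in "f(X²)² + X² g(X²)²" form
lemma prod_form (A B f g : Polynomial ℝ) :
    ((A.comp (X^2))^2 + X^2 * (B.comp (X^2))^2) * ((f.comp (X^2))^2 + X^2 * (g.comp (X^2))^2)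
    = (((A*f - X*(B*g)).comp (X^2))^2 + X^2 * (((A*g + B*f)).comp (X^2))^2) := by
  simp only [mul_comp, sub_comp, add_comp, X_comp]
  ring

lemma quot_even_nonneg (M Q : Polynomial ℝ) (s : Set ℝ) (hs : s.Finite)
    (hMe : ∀ x : ℝ, M.eval (-x) = M.eval x)
    (hMpos : ∀ x ∉ s, 0 < M.eval x)
    (hHe : ∀ x : ℝ, (M*Q).eval (-x) = (M*Q).eval x)
    (hHnn : ∀ x : ℝ, 0 ≤ (M*Q).eval x) :
    (∀ x : ℝ, Q.eval (-x) = Q.eval x) ∧ (∀ x : ℝ, 0 ≤ Q.eval x) := by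
  set t : Set ℝ := s ∪ (Neg.neg '' s) with ht
  have htfin : t.Finite := hs.union (hs.image _)
  have hmem : ∀ x ∉ t, x ∉ s ∧ -x ∉ s := by
    intro x hx
    constructor
    · exact fun h => hx (Set.mem_union_left _ h)
    · intro h
      exact hx (Set.mem_union_right _ ⟨-x, h, by simp⟩)
  constructor
  · have : Q.comp (-X) = Q := by
      apply helper_eq _ _ t htfin
      intro x hx
      obtain ⟨h1, h2⟩ := hmem x hx
      have e1 := hHe x
      simp only [eval_mul] at e1
      rw [hMe x] at e1
      have := hMpos x h1
      have : Q.eval (-x) = Q.eval x := by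
        exact mul_left_cancel₀ (hMpos x h1).ne' e1
      simpa [eval_comp]
    intro x
    have := congrArg (Polynomial.eval x) this
    simpa [eval_comp] using this
  · apply helper_nonneg _ s hs
    intro x hx
    have h1 := hHnn x
    simp only [eval_mul] at h1
    nlinarith [hMpos x hx]
lemma double_root (H : Polynomial ℝ) (r : ℝ) (h0 : H.eval r = 0)
    (hnn : ∀ x, 0 ≤ H.eval x) : (X - C r)^2 ∣ H := by
  obtain ⟨Q, hQ⟩ := (dvd_iff_isRoot).mpr h0
  have hmin : IsLocalMin (fun x => H.eval x) r :=
    Filter.Eventually.of_forall (fun x => by simpa [h0] using hnn x)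
  have hder : H.derivative.eval r = 0 := by
    have := hmin.deriv_eq_zero
    rwa [Polynomial.deriv] at this
  have hQr : Q.eval r = 0 := by
    have : H.derivative = Q + (X - C r) * Q.derivative := by
      rw [hQ]; simp [derivative_mul]
    rw [this] at hder
    simpa using hder
  obtain ⟨Q2, hQ2⟩ := (dvd_iff_isRoot).mpr hQr
  exact ⟨Q2, by rw [hQ, hQ2]; ring⟩


-- generic: if R has small degree and enough roots, M ∣ H where R = H %ₘ M
lemma dvd_of_roots (H M : Polynomial ℝ) (hM : M.Monic) (pts : Finset ℂ)
    (hcard : M.natDegree ≤ pts.card)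
    (hHroots : ∀ w ∈ pts, aeval w H = 0)
    (hMroots : ∀ w ∈ pts, aeval w M = 0) : M ∣ H := by
  have hdecomp := modByMonic_add_div H M
  set R := H %ₘ M with hR
  have hRz : R = 0 := by
    by_cases hR0 : R = 0
    · exact hR0
    have hRroots : ∀ w ∈ pts, aeval w R = 0 := by
      intro w hw
      have : aeval w R + aeval w M * aeval w (H /ₘ M) = aeval w H := by
        rw [← map_mul, ← map_add, hdecomp]
      rw [hHroots w hw, hMroots w hw] at this
      simpa using this
    have hdeg : (R.map (algebraMap ℝ ℂ)).natDegree < pts.card := by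
      have h1 : R.degree < M.degree := degree_modByMonic_lt H hM
      have h2 : M.degree ≤ (M.natDegree : WithBot ℕ) := degree_le_natDegree
      have h3 : R.degree < (M.natDegree : WithBot ℕ) := lt_of_lt_of_le h1 h2
      have h4 : R.natDegree < M.natDegree := (natDegree_lt_iff_degree_lt hR0).mpr h3
      rw [natDegree_map_eq_of_injective (algebraMap ℝ ℂ).injective]
      omega
    have := Polynomial.eq_zero_of_natDegree_lt_card_of_eval_eq_zero' (R.map (algebraMap ℝ ℂ)) pts
      (fun w hw => by rw [eval_map, ← aeval_def]; exact hRroots w hw) hdeg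
    exact hR0 ((Polynomial.map_eq_zero _).mp this) |>.elim
  rw [hRz, zero_add] at hdecomp
  exact ⟨H /ₘ M, hdecomp.symm⟩

lemma key_sq (w : ℂ) : (w^2 - ((w.re^2 + w.im^2 : ℝ) : ℂ))^2 = -(4 * (w.im:ℂ)^2 * w^2) := by
  have h1 : w^2 - ((w.re^2 + w.im^2 : ℝ) : ℂ) = 2*(w.im:ℂ)*Complex.I*w := by
    apply Complex.ext <;> simp [pow_two, Complex.mul_re, Complex.mul_im] <;> ring
  rw [h1]
  linear_combination (4 * (w.im:ℂ)^2 * w^2) * Complex.I_sq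

lemma quart_root (c e : ℝ) (w : ℂ) (hc : w.re^2 + w.im^2 = c) (he : e^2 = 4 * w.im^2) :
    (w^2 - (c:ℂ))^2 + (e:ℂ)^2 * w^2 = 0 := by
  have hc' : (c:ℂ) = ((w.re^2 + w.im^2 : ℝ):ℂ) := by exact_mod_cast congrArg (Complex.ofReal) hc.symm
  have h2 : ((e:ℂ))^2 = 4*((w.im:ℂ))^2 := by exact_mod_cast congrArg (Complex.ofReal) he
  rw [hc']
  linear_combination key_sq w + w^2 * h2

lemma quad_root (v : ℝ) (w : ℂ) (hre : w.re = 0) (hv : w.im^2 = v^2) :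
    w^2 + ((v^2 : ℝ):ℂ) = 0 := by
  have h1 : w = (w.im:ℂ) * Complex.I := by
    apply Complex.ext <;> simp [hre]
  rw [h1]
  have h2 : ((v^2:ℝ):ℂ) = ((w.im:ℂ))^2 := by exact_mod_cast congrArg (Complex.ofReal) hv.symm
  rw [h2]
  linear_combination ((w.im:ℂ))^2 * Complex.I_sq
lemma step (H M Q A B : Polynomial ℝ) (s : Set ℝ) (hs : s.Finite)
    (hM : M = (A.comp (X^2))^2 + X^2 * (B.comp (X^2))^2)
    (hHM : H = M * Q)
    (hMpos : ∀ x ∉ s, 0 < M.eval x)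
    (hHe : ∀ x : ℝ, H.eval (-x) = H.eval x)
    (hHnn : ∀ x : ℝ, 0 ≤ H.eval x)
    (hH0 : H ≠ 0) (hMdeg : 1 ≤ M.natDegree)
    (next : ∀ Q' : Polynomial ℝ, Q'.natDegree < H.natDegree →
      (∀ x : ℝ, Q'.eval (-x) = Q'.eval x) → (∀ x : ℝ, 0 ≤ Q'.eval x) →
      ∃ f g : Polynomial ℝ, Q' = (f.comp (X^2))^2 + X^2 * (g.comp (X^2))^2) :
    ∃ f g : Polynomial ℝ, H = (f.comp (X^2))^2 + X^2 * (g.comp (X^2))^2 := by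
  have hQ0 : Q ≠ 0 := by rintro rfl; rw [mul_zero] at hHM; exact hH0 hHM
  have hM0 : M ≠ 0 := by rintro rfl; simp at hMdeg
  have hdeg : H.natDegree = M.natDegree + Q.natDegree := by rw [hHM, natDegree_mul hM0 hQ0]
  have hMe : ∀ x : ℝ, M.eval (-x) = M.eval x := by
    intro x; rw [hM]; simp [eval_comp]
  obtain ⟨hQe, hQnn⟩ := quot_even_nonneg M Q s hs hMe hMpos
    (by intro x; rw [← hHM]; exact hHe x) (by intro x; rw [← hHM]; exact hHnn x)
  obtain ⟨f₁, g₁, hfg⟩ := next Q (by omega) hQe hQnn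
  exact ⟨A*f₁ - X*(B*g₁), A*g₁ + B*f₁, by rw [hHM, hM, hfg, prod_form]⟩

lemma main_even : ∀ (n : ℕ) (H : Polynomial ℝ), H.natDegree ≤ n →
    (∀ x : ℝ, H.eval (-x) = H.eval x) → (∀ x : ℝ, 0 ≤ H.eval x) →
    ∃ f g : Polynomial ℝ, H = (f.comp (X^2))^2 + X^2 * (g.comp (X^2))^2 := by
  intro n
  induction n using Nat.strong_induction_on with
  | _ n IH =>
  intro H hnd hHe hHnn
  by_cases hc : H.natDegree = 0
  · refine ⟨C (Real.sqrt (H.eval 0)), 0, ?_⟩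
    have hH : H = C (H.coeff 0) := eq_C_of_natDegree_eq_zero hc
    have h0 : H.coeff 0 = H.eval 0 := coeff_zero_eq_eval_zero H
    have hs : Real.sqrt (H.eval 0) ^ 2 = H.eval 0 := Real.sq_sqrt (hHnn 0)
    conv_lhs => rw [hH, h0]
    simp only [C_comp, zero_comp, ← map_pow, hs]
    ring
  · have hH0 : H ≠ 0 := fun h => hc (h ▸ natDegree_zero)
    have hnext : ∀ Q' : Polynomial ℝ, Q'.natDegree < H.natDegree →
        (∀ x : ℝ, Q'.eval (-x) = Q'.eval x) → (∀ x : ℝ, 0 ≤ Q'.eval x) →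
        ∃ f g : Polynomial ℝ, Q' = (f.comp (X^2))^2 + X^2 * (g.comp (X^2))^2 :=
      fun Q' h1 h2 h3 => IH Q'.natDegree (lt_of_lt_of_le h1 hnd) Q' le_rfl h2 h3
    have hdpos : 0 < H.degree := natDegree_pos_iff_degree_pos.mp (Nat.pos_of_ne_zero hc)
    have hmapdeg : 0 < (H.map (algebraMap ℝ ℂ)).degree := by
      rwa [degree_map_eq_of_injective (algebraMap ℝ ℂ).injective]
    obtain ⟨z, hz⟩ := Complex.exists_root hmapdeg
    have hzH : aeval z H = 0 := by rwa [aeval_def, ← eval_map]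
    have hev : H.comp (-X) = H := by
      apply helper_eq _ _ ∅ Set.finite_empty
      intro x _
      simp only [eval_comp, eval_neg, eval_X]
      exact hHe x
    have hevenC : ∀ w : ℂ, aeval (-w) H = aeval w H := by
      intro w
      conv_rhs => rw [← hev]
      rw [aeval_comp]
      simp
    have hconj : aeval ((starRingEnd ℂ) z) H = 0 := by
      have := Polynomial.aeval_algHom_apply Complex.conjAe z H
      rw [Complex.conjAe_coe] at this
      rw [this, hzH, map_zero]
    by_cases him : z.im = 0
    · -- real root
      set r := z.re with hrdef
      have hr : H.eval r = 0 := by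
        have hz' : z = algebraMap ℝ ℂ r := by
          apply Complex.ext <;> simp [him, hrdef]
        rw [hz', aeval_def, eval₂_at_apply] at hzH
        rwa [Complex.coe_algebraMap, Complex.ofReal_eq_zero] at hzH
      by_cases hr0 : r = 0
      · obtain ⟨Q, hQ⟩ : (X:Polynomial ℝ)^2 ∣ H := by
          have := double_root H r hr hHnn
          simpa [hr0] using this
        refine step H (X^2) Q 0 1 {0} (Set.finite_singleton 0) (by simp) hQ ?_ hHe hHnn hH0 ?_ hnext
        · intro x hx
          have hx' : x ≠ 0 := by simpa using hx
          simp only [eval_pow, eval_X]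
          positivity
        · simp [natDegree_X_pow]
      · have h1 : (X - C r)^2 ∣ H := double_root H r hr hHnn
        have h2 : (X - C (-r))^2 ∣ H := double_root H (-r) ((hHe r).trans hr) hHnn
        have h2r : (2*r) ≠ 0 := by simpa using hr0
        have cop : IsCoprime (X - C r) (X - C (-r)) := by
          refine ⟨-C ((2*r)⁻¹), C ((2*r)⁻¹), ?_⟩
          have key : (C ((2*r)⁻¹) * C (2*r) : Polynomial ℝ) = 1 := by
            rw [← C_mul, inv_mul_cancel₀ h2r, C_1]
          have h2' : (C (2*r) : Polynomial ℝ) = 2 * C r := by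
            rw [C_mul, map_ofNat]
          rw [h2'] at key
          simp only [C_neg]
          linear_combination key
        obtain ⟨Q, hQ⟩ : (X - C r)^2 * (X - C (-r))^2 ∣ H := (cop.pow).mul_dvd h1 h2
        refine step H _ Q (X - C (r^2)) 0 {r, -r} (Set.toFinite _) ?_ hQ ?_ hHe hHnn hH0 ?_ hnext
        · simp only [sub_comp, X_comp, C_comp, zero_comp, C_neg]
          rw [show (C (r^2) : Polynomial ℝ) = (C r)^2 by rw [← C_pow]]
          ring
        · intro x hx
          simp only [Set.mem_insert_iff, Set.mem_singleton_iff, not_or] at hx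
          obtain ⟨hx1, hx2⟩ := hx
          have e1 : x - r ≠ 0 := sub_ne_zero.mpr hx1
          have e2 : x + r ≠ 0 := fun h => hx2 (by linarith)
          have p1 : 0 < (x - r)^2 := by positivity
          have p2 : 0 < (x + r)^2 := by positivity
          simp only [eval_mul, eval_pow, eval_sub, eval_add, eval_X, eval_C, C_neg, eval_neg, sub_neg_eq_add]
          nlinarith [p1, p2]
        · rw [natDegree_mul (pow_ne_zero _ (X_sub_C_ne_zero _)) (pow_ne_zero _ (X_sub_C_ne_zero _))]
          simp [natDegree_pow, natDegree_X_sub_C]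
    · -- complex root, z.im ≠ 0
      have hzneg : aeval (-z) H = 0 := by rw [hevenC]; exact hzH
      have hznegconj : aeval (-((starRingEnd ℂ) z)) H = 0 := by rw [hevenC]; exact hconj
      have hz0 : z ≠ 0 := fun h => him (by rw [h]; simp)
      by_cases hre : z.re = 0
      · -- purely imaginary root: quadratic divisor
        set v := z.im with hv
        have hv0 : v ≠ 0 := him
        set M : Polynomial ℝ := X^2 + C (v^2) with hMdef
        have hmon : M.Monic := by
          rw [hMdef]
          apply monic_X_pow_add
          exact lt_of_le_of_lt degree_C_le (by norm_num)
        have hform : M = ((C v).comp (X^2))^2 + X^2*((1:Polynomial ℝ).comp (X^2))^2 := by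
          rw [hMdef]
          simp only [C_comp, one_comp, ← map_pow]
          ring
        have haevalM : ∀ w : ℂ, aeval w M = w^2 + ((v^2:ℝ):ℂ) := by
          intro w
          rw [hMdef]
          simp [Complex.coe_algebraMap]
        have hd1 : z ≠ -z := fun hh => hz0 (add_self_eq_zero.mp (by linear_combination hh))
        have hcard : ({z, -z} : Finset ℂ).card = 2 := by
          rw [Finset.card_insert_of_notMem (by simp [hd1]), Finset.card_singleton]
        have hdvd : M ∣ H := by
          apply dvd_of_roots H M hmon {z, -z}
          · rw [hcard, hMdef, natDegree_X_pow_add_C]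
          · intro w hw
            simp only [Finset.mem_insert, Finset.mem_singleton] at hw
            rcases hw with rfl | rfl
            · exact hzH
            · exact hzneg
          · intro w hw
            simp only [Finset.mem_insert, Finset.mem_singleton] at hw
            rw [haevalM w]
            rcases hw with h | h
            · rw [h]; exact quad_root v z hre rfl
            · rw [h]; exact quad_root v (-z) (by simp [hre]) (by rw [hv]; simp)
        obtain ⟨Q, hQ⟩ := hdvd
        refine step H M Q (C v) 1 ∅ Set.finite_empty hform hQ ?_ hHe hHnn hH0 ?_ hnext
        · intro x _
          rw [hMdef]
          simp only [eval_add, eval_pow, eval_X, eval_C]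
          positivity
        · rw [hMdef, natDegree_X_pow_add_C]; norm_num
      · -- generic complex root: quartic divisor
        set c := z.re^2 + z.im^2 with hcdef
        set e := 2*z.im with hedef
        have he0 : e ≠ 0 := by simp [hedef, him]
        have hcpos : 0 < c := by rw [hcdef]; positivity
        set M : Polynomial ℝ := ((X - C c).comp (X^2))^2 + X^2 * ((C e).comp (X^2))^2 with hMdef
        have hMexp : M = X^4 + (C (e^2 - 2*c) * X^2 + C (c^2)) := by
          rw [hMdef]
          simp only [sub_comp, X_comp, C_comp, map_sub, map_mul, map_pow, map_ofNat]
          ring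
        have hmon : M.Monic := by
          rw [hMexp]
          apply monic_X_pow_add
          apply lt_of_le_of_lt (degree_add_le _ _)
          apply max_lt
          · exact lt_of_le_of_lt (degree_mul_le _ _) (by
              apply lt_of_le_of_lt (add_le_add degree_C_le (degree_X_pow 2).le)
              norm_num)
          · exact lt_of_le_of_lt degree_C_le (by norm_num)
        have haevalM : ∀ w : ℂ, aeval w M = (w^2 - (c:ℂ))^2 + (e:ℂ)^2*w^2 := by
          intro w
          rw [hMdef]
          simp [aeval_comp, Complex.coe_algebraMap]
          ring
        have hevalM : ∀ x : ℝ, M.eval x = (x^2 - c)^2 + e^2*x^2 := by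
          intro x
          rw [hMdef]
          simp [eval_comp]
          ring
        have hd2 : z ≠ (starRingEnd ℂ) z := fun hh => him (by
          have := congrArg Complex.im hh
          simp at this
          linarith)
        have hd1 : z ≠ -z := fun hh => hz0 (add_self_eq_zero.mp (by linear_combination hh))
        have hd3 : z ≠ -((starRingEnd ℂ) z) := fun hh => hre (by
          have := congrArg Complex.re hh
          simp at this
          linarith)
        have hd4 : -z ≠ (starRingEnd ℂ) z := fun hh => hre (by
          have := congrArg Complex.re hh
          simp at this
          linarith)
        have hd5 : -z ≠ -((starRingEnd ℂ) z) := fun hh => hd2 (neg_injective hh)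
        have hd6 : (starRingEnd ℂ) z ≠ -((starRingEnd ℂ) z) := fun hh => by
          have : (starRingEnd ℂ) z = 0 := add_self_eq_zero.mp (by linear_combination hh)
          exact hz0 (by simpa using congrArg (starRingEnd ℂ) this)
        have hcard : ({z, -z, (starRingEnd ℂ) z, -((starRingEnd ℂ) z)} : Finset ℂ).card = 4 := by
          rw [Finset.card_insert_of_notMem (by simp [hd1, hd2, hd3]),
            Finset.card_insert_of_notMem (by simp [hd4, hd5]),
            Finset.card_insert_of_notMem (by simp [hd6]), Finset.card_singleton]
        have hMdeg4 : M.natDegree = 4 := by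
          have hlow : (C (e^2 - 2*c) * X^2 + C (c^2) : Polynomial ℝ).natDegree < (X^4 : Polynomial ℝ).natDegree := by
            rw [natDegree_X_pow]
            have : (C (e^2 - 2*c) * X^2 + C (c^2) : Polynomial ℝ).natDegree ≤ 2 := by
              compute_degree
            omega
          rw [hMexp, natDegree_add_eq_left_of_natDegree_lt hlow, natDegree_X_pow]
        have hdvd : M ∣ H := by
          apply dvd_of_roots H M hmon {z, -z, (starRingEnd ℂ) z, -((starRingEnd ℂ) z)}
          · rw [hcard, hMdeg4]
          · intro w hw
            simp only [Finset.mem_insert, Finset.mem_singleton] at hw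
            rcases hw with rfl | rfl | rfl | rfl
            · exact hzH
            · exact hzneg
            · exact hconj
            · exact hznegconj
          · intro w hw
            simp only [Finset.mem_insert, Finset.mem_singleton] at hw
            rw [haevalM w]
            rcases hw with h | h | h | h <;> rw [h]
            · exact quart_root c e z rfl (by rw [hedef]; ring)
            · exact quart_root c e (-z) (by simp [hcdef, neg_sq]) (by simp [hedef, neg_sq]; ring)
            · exact quart_root c e _ (by simp [hcdef, neg_sq]) (by simp [hedef, neg_sq]; ring)
            · exact quart_root c e _ (by simp [hcdef, neg_sq]) (by simp [hedef, neg_sq]; ring)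
        obtain ⟨Q, hQ⟩ := hdvd
        refine step H M Q (X - C c) (C e) ∅ Set.finite_empty hMdef hQ ?_ hHe hHnn hH0 ?_ hnext
        · intro x _
          rw [hevalM x]
          rcases eq_or_ne x 0 with rfl | hx0
          · simp
            positivity
          · have h1 : 0 < e^2*x^2 := by positivity
            nlinarith [sq_nonneg (x^2 - c)]
        · rw [hMdeg4]; norm_num

lemma deg_bound (f g H : Polynomial ℝ)
    (hH : H = (f.comp (X^2))^2 + X^2 * (g.comp (X^2))^2) (n : ℕ) (hn : H.natDegree ≤ n) :
    (f = 0 ∨ 4*f.natDegree ≤ n) ∧ (g = 0 ∨ 2 + 4*g.natDegree ≤ n) := by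
  have hcompf : f ≠ 0 → f.comp (X^2) ≠ 0 := by
    intro hf hc
    rcases comp_eq_zero_iff.mp hc with h | ⟨_, h⟩
    · exact hf h
    · have := congrArg natDegree h
      simp [natDegree_X_pow] at this
  have hcompg : g ≠ 0 → g.comp (X^2) ≠ 0 := by
    intro hf hc
    rcases comp_eq_zero_iff.mp hc with h | ⟨_, h⟩
    · exact hf h
    · have := congrArg natDegree h
      simp [natDegree_X_pow] at this
  have hA : f ≠ 0 → ((f.comp (X^2))^2).natDegree = 4 * f.natDegree := by
    intro hf
    rw [natDegree_pow, natDegree_comp, natDegree_X_pow]; ring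
  have hB : g ≠ 0 → (X^2 * (g.comp (X^2))^2).natDegree = 2 + 4 * g.natDegree := by
    intro hg
    rw [natDegree_mul (pow_ne_zero _ X_ne_zero) (pow_ne_zero _ (hcompg hg)),
      natDegree_pow, natDegree_pow, natDegree_comp, natDegree_X_pow, natDegree_X]; ring
  by_cases hf : f = 0
  · refine ⟨Or.inl hf, ?_⟩
    by_cases hg : g = 0
    · exact Or.inl hg
    · right
      have : H.natDegree = 2 + 4*g.natDegree := by
        rw [hH, hf]; simp only [zero_comp, ne_eq, OfNat.ofNat_ne_zero, not_false_eq_true,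
          zero_pow, zero_add]
        exact hB hg
      omega
  · by_cases hg : g = 0
    · refine ⟨?_, Or.inl hg⟩
      right
      have : H.natDegree = 4*f.natDegree := by
        rw [hH, hg]; simp only [zero_comp, ne_eq, OfNat.ofNat_ne_zero, not_false_eq_true,
          zero_pow, mul_zero, add_zero]
        exact hA hf
      omega
    · have hAB : ((f.comp (X^2))^2).natDegree ≠ (X^2 * (g.comp (X^2))^2).natDegree := by
        rw [hA hf, hB hg]; omega
      rcases lt_or_gt_of_ne hAB with hlt | hgt
      · have hdeg : H.natDegree = 2 + 4*g.natDegree := by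
          rw [hH, natDegree_add_eq_right_of_natDegree_lt hlt]; exact hB hg
        rw [hA hf, hB hg] at hlt
        exact ⟨Or.inr (by omega), Or.inr (by omega)⟩
      · have hdeg : H.natDegree = 4*f.natDegree := by
          rw [hH, natDegree_add_eq_left_of_natDegree_lt hgt]; exact hA hf
        rw [hA hf, hB hg] at hgt
        exact ⟨Or.inr (by omega), Or.inr (by omega)⟩

open Polynomial in
theorem stmt_7 (h : Polynomial ℝ) (d₀ : ℕ) (hdeg : h.natDegree = 2 * d₀ + 1)
    (a b : ℝ) (hab : a < b) (hpos : ∀ x ∈ Set.Icc a b, 0 ≤ h.eval x) :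
    ∃ p q : Polynomial ℝ, p.degree ≤ d₀ ∧ q.degree ≤ d₀ ∧
      h = (X - C a) * p ^ 2 + (C b - X) * q ^ 2 := by
  set d : ℕ := 2 * d₀ + 1 with hd
  have hba : (0:ℝ) < b - a := by linarith
  set H : Polynomial ℝ :=
    ∑ i ∈ Finset.range (d+1), C (h.coeff i) * (C a + C b * X^2)^i * ((1:Polynomial ℝ) + X^2)^(d-i)
    with hHdef
  have HevalEq : ∀ w : ℝ, H.eval w =
      ∑ i ∈ Finset.range (d+1), h.coeff i * (a + b*w^2)^i * (1 + w^2)^(d-i) := by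
    intro w
    rw [hHdef, eval_finset_sum]
    apply Finset.sum_congr rfl
    intro i _
    simp [eval_pow, eval_mul, eval_add, eval_C, eval_X]
  have Hval : ∀ w : ℝ, H.eval w = (1+w^2)^d * h.eval ((a+b*w^2)/(1+w^2)) := by
    intro w
    have hne : (1:ℝ)+w^2 ≠ 0 := by positivity
    rw [HevalEq w, eval_eq_sum_range' (show h.natDegree < d+1 by omega), Finset.mul_sum]
    apply Finset.sum_congr rfl
    intro i hi
    have hi' : i ≤ d := by
      simp only [Finset.mem_range] at hi; omega
    have hdd : ((1:ℝ)+w^2)^d = (1+w^2)^i * (1+w^2)^(d-i) := by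
      rw [← pow_add]; congr 1; omega
    rw [div_pow, hdd]
    field_simp
  have Heven : ∀ x : ℝ, H.eval (-x) = H.eval x := by
    intro x
    rw [HevalEq, HevalEq]
    simp only [neg_sq]
  have Hnn : ∀ w : ℝ, 0 ≤ H.eval w := by
    intro w
    have h1 : (0:ℝ) < 1 + w^2 := by positivity
    have ha' : a ≤ (a+b*w^2)/(1+w^2) := by
      rw [le_div_iff₀ h1]; nlinarith [sq_nonneg w]
    have hb' : (a+b*w^2)/(1+w^2) ≤ b := by
      rw [div_le_iff₀ h1]; nlinarith [sq_nonneg w]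
    rw [Hval w]
    exact mul_nonneg (by positivity) (hpos _ ⟨ha', hb'⟩)
  have HdegLe : H.natDegree ≤ 2*d := by
    rw [hHdef]
    apply natDegree_sum_le_of_forall_le
    intro i hi
    have hi' : i ≤ d := by simp only [Finset.mem_range] at hi; omega
    calc (C (h.coeff i) * (C a + C b * X^2)^i * ((1:Polynomial ℝ) + X^2)^(d-i)).natDegree
        ≤ (C (h.coeff i) * (C a + C b * X^2)^i).natDegree
          + (((1:Polynomial ℝ) + X^2)^(d-i)).natDegree := natDegree_mul_le
      _ ≤ ((C (h.coeff i)).natDegree + ((C a + C b * X^2)^i).natDegree)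
          + (((1:Polynomial ℝ) + X^2)^(d-i)).natDegree := by
            exact Nat.add_le_add_right natDegree_mul_le _
      _ ≤ (0 + i*2) + (d-i)*2 := by
            apply add_le_add
            · apply add_le_add
              · simp [natDegree_C]
              · exact le_trans natDegree_pow_le (by
                  have : (C a + C b * X^2).natDegree ≤ 2 := by compute_degree
                  nlinarith)
            · exact le_trans natDegree_pow_le (by
                  have : ((1:Polynomial ℝ) + X^2).natDegree ≤ 2 := by compute_degree
                  nlinarith)
      _ ≤ 2*d := by omega
  obtain ⟨f, g, Hpoly⟩ := main_even (2*d) H HdegLe Heven Hnn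
  obtain ⟨hfb, hgb⟩ := deg_bound f g H Hpoly (2*d) HdegLe
  have hfdeg : f.natDegree ≤ d₀ := by
    rcases hfb with rfl | hfb
    · simp
    · omega
  have hgdeg : g.natDegree ≤ d₀ := by
    rcases hgb with rfl | hgb
    · simp
    · omega
  set cst : ℝ := ((b-a)^d₀ * Real.sqrt (b-a))⁻¹ with hcst
  have hcst2 : cst^2 * (b-a)^d = 1 := by
    have h1 : ((b-a)^d₀*Real.sqrt (b-a))^2 = (b-a)^d := by
      rw [mul_pow, Real.sq_sqrt hba.le, ← pow_mul, ← pow_succ]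
      congr 1
      omega
    rw [hcst, inv_pow, h1]
    exact inv_mul_cancel₀ (by positivity)
  set p : Polynomial ℝ :=
    C cst * ∑ j ∈ Finset.range (d₀+1), C (g.coeff j) * (X - C a)^j * (C b - X)^(d₀ - j) with hpdef
  set q : Polynomial ℝ :=
    C cst * ∑ j ∈ Finset.range (d₀+1), C (f.coeff j) * (X - C a)^j * (C b - X)^(d₀ - j) with hqdef
  have hdegsum : ∀ r : Polynomial ℝ,
      (C cst * ∑ j ∈ Finset.range (d₀+1), C (r.coeff j) * (X - C a)^j * (C b - X)^(d₀ - j)).natDegree ≤ d₀ := by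
    intro r
    apply le_trans natDegree_mul_le
    rw [natDegree_C, zero_add]
    apply natDegree_sum_le_of_forall_le
    intro j hj
    have hj' : j ≤ d₀ := by simp only [Finset.mem_range] at hj; omega
    calc (C (r.coeff j) * (X - C a)^j * (C b - X)^(d₀ - j)).natDegree
        ≤ ((C (r.coeff j) * (X - C a)^j).natDegree + ((C b - X)^(d₀-j)).natDegree) := natDegree_mul_le
      _ ≤ ((C (r.coeff j)).natDegree + ((X - C a)^j).natDegree) + ((C b - X)^(d₀-j)).natDegree := by
            exact Nat.add_le_add_right natDegree_mul_le _
      _ ≤ (0 + j*1) + (d₀-j)*1 := by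
            apply add_le_add
            · apply add_le_add
              · simp [natDegree_C]
              · exact le_trans natDegree_pow_le (by
                  have : (X - C a).natDegree ≤ 1 := by compute_degree
                  nlinarith)
            · exact le_trans natDegree_pow_le (by
                  have : (C b - X).natDegree ≤ 1 := by compute_degree
                  nlinarith)
      _ ≤ d₀ := by omega
  refine ⟨p, q, natDegree_le_iff_degree_le.mp (hpdef ▸ hdegsum g),
    natDegree_le_iff_degree_le.mp (hqdef ▸ hdegsum f), ?_⟩
  -- final identity via evaluation on (a,b)
  apply Polynomial.eq_of_infinite_eval_eq
  have hIoo : (Set.Ioo a b).Infinite := Set.infinite_coe_iff.mp (Set.Ioo.infinite hab)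
  apply hIoo.mono
  intro x hx
  simp only [Set.mem_setOf_eq]
  obtain ⟨hax, hxb⟩ := hx
  have hbx : (0:ℝ) < b - x := by linarith
  have hxa : (0:ℝ) < x - a := by linarith
  set s : ℝ := (x-a)/(b-x) with hsdef
  have hs0 : 0 ≤ s := by positivity
  have hspos : 0 < s := by positivity
  set w : ℝ := Real.sqrt s with hwdef
  have hw2 : w^2 = s := Real.sq_sqrt hs0
  have harg : (a+b*s)/(1+s) = x := by
    rw [hsdef]
    field_simp
    ring
  have hHw : H.eval w = (f.eval s)^2 + s * (g.eval s)^2 := by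
    have := congrArg (Polynomial.eval w) Hpoly
    simpa [eval_comp, hw2] using this
  have E1 : (1+s)^d * h.eval x = (f.eval s)^2 + s * (g.eval s)^2 := by
    rw [← hHw, Hval w, hw2, harg]
  have evalsum : ∀ r : Polynomial ℝ, r.natDegree ≤ d₀ →
      (C cst * ∑ j ∈ Finset.range (d₀+1), C (r.coeff j) * (X - C a)^j * (C b - X)^(d₀ - j)).eval x
      = cst * ((b-x)^d₀ * r.eval s) := by
    intro r hr
    rw [eval_mul, eval_C, eval_finset_sum]
    congr 1
    rw [eval_eq_sum_range' (show r.natDegree < d₀+1 by omega), Finset.mul_sum]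
    apply Finset.sum_congr rfl
    intro j hj
    have hj' : j ≤ d₀ := by simp only [Finset.mem_range] at hj; omega
    have hsplit : ((b:ℝ)-x)^d₀ = (b-x)^j * (b-x)^(d₀-j) := by
      rw [← pow_add]; congr 1; omega
    simp only [eval_mul, eval_pow, eval_sub, eval_X, eval_C]
    rw [hsdef, div_pow, hsplit]
    field_simp
  have E2 : q.eval x = cst * ((b-x)^d₀ * f.eval s) := hqdef ▸ evalsum f hfdeg
  have E3 : p.eval x = cst * ((b-x)^d₀ * g.eval s) := hpdef ▸ evalsum g hgdeg
  have hsx : x - a = s * (b - x) := by rw [hsdef]; field_simp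
  have hbs : (b - x) * (1 + s) = b - a := by rw [hsdef]; field_simp; ring
  have calc1 : (x - a) * (cst * ((b-x)^d₀ * g.eval s))^2 + (b - x) * (cst * ((b-x)^d₀ * f.eval s))^2
      = cst^2 * ((b-x)^d * ((f.eval s)^2 + s * (g.eval s)^2)) := by
    rw [hsx, hd]
    ring
  have main : h.eval x
      = (x-a)*(cst*((b-x)^d₀*g.eval s))^2 + (b-x)*(cst*((b-x)^d₀*f.eval s))^2 := by
    calc h.eval x = (cst^2 * (b-a)^d) * h.eval x := by rw [hcst2, one_mul]
      _ = cst^2 * (((b-x)*(1+s))^d * h.eval x) := by rw [hbs]; ring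
      _ = cst^2 * ((b-x)^d * ((1+s)^d * h.eval x)) := by rw [mul_pow]; ring
      _ = cst^2 * ((b-x)^d * ((f.eval s)^2 + s*(g.eval s)^2)) := by rw [E1]
      _ = _ := calc1.symm
  simp only [eval_add, eval_mul, eval_pow, eval_sub, eval_X, eval_C]
  rw [E2, E3]
  exact main
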